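/- Let J be a real m×q matrix, c > 0, and let M be a real symmetric positive definite m×m matrix with M ⪯ c·I (i.e., c·I − M is positive semidefinite). Then tr( (Jᵀ M J)† · (Jᵀ J) ) ≥ (1/c) · rank J, where (Jᵀ M J)† denotes the Moore–Penrose pseudoinverse of Jᵀ M J. -/

import Mathlib

open Matrix

/-- `P` is the Moore–Penrose pseudoinverse of `A`, characterized by the four
Penrose conditions. -/
def IsMoorePenroseInv {q : Type*} [Fintype q]
    (A P : Matrix q q ℝ) : Prop :=
  A * P * A = A ∧ P * A * P = P ∧ (A * P)ᵀ = A * P ∧ (P * A)ᵀ = P * A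

section Aux
variable {n : Type*} [Fintype n]

lemma myTraceNonneg [DecidableEq n] {X : Matrix n n ℝ} (hX : X.PosSemidef) :
    0 ≤ X.trace := by
  rw [Matrix.trace]
  refine Finset.sum_nonneg fun i _ => ?_
  have h := hX.dotProduct_mulVec_nonneg (Pi.single i 1)
  simpa [dotProduct, Matrix.mulVec, Pi.single_apply] using h

lemma myTraceMulNonneg [DecidableEq n] {P Q : Matrix n n ℝ}
    (hP : P.PosSemidef) (hQ : Q.PosSemidef) : 0 ≤ (P * Q).trace := by
  obtain ⟨B, rfl⟩ : ∃ B : Matrix n n ℝ, Q = Bᵀ * B := by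
    open scoped MatrixOrder in
    exact ⟨CFC.sqrt Q, by rw [← conjTranspose_eq_transpose_of_trivial, (CFC.sqrt_nonneg Q).posSemidef.1.eq, CFC.sqrt_mul_sqrt_self Q hQ.nonneg]⟩
  rw [← Matrix.mul_assoc, Matrix.trace_mul_cycle]
  exact myTraceNonneg (hP.mul_mul_conjTranspose_same B)

lemma myMPUnique {A P Q : Matrix n n ℝ}
    (hP : IsMoorePenroseInv A P) (hQ : IsMoorePenroseInv A Q) : P = Q := by
  obtain ⟨hP1, hP2, hP3, hP4⟩ := hP
  obtain ⟨hQ1, hQ2, hQ3, hQ4⟩ := hQ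
  have h1 : A * P = A * Q := by
    calc A * P = (A * Q) * (A * P) := by rw [← Matrix.mul_assoc, hQ1]
      _ = (A * Q)ᵀ * (A * P)ᵀ := by rw [hQ3, hP3]
      _ = Qᵀ * (A * P * A)ᵀ := by
          simp only [Matrix.transpose_mul, Matrix.mul_assoc]
      _ = Qᵀ * Aᵀ := by rw [hP1]
      _ = (A * Q)ᵀ := by rw [Matrix.transpose_mul]
      _ = A * Q := hQ3
  have h2 : P * A = Q * A := by
    calc P * A = (P * A) * (Q * A) := by rw [Matrix.mul_assoc, ← Matrix.mul_assoc A Q A, hQ1]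
      _ = (P * A)ᵀ * (Q * A)ᵀ := by rw [hP4, hQ4]
      _ = (A * P * A)ᵀ * Qᵀ := by
          simp only [Matrix.transpose_mul, Matrix.mul_assoc]
      _ = Aᵀ * Qᵀ := by rw [hP1]
      _ = (Q * A)ᵀ := by rw [Matrix.transpose_mul]
      _ = Q * A := hQ4
  calc P = P * A * P := hP2.symm
    _ = P * (A * Q) := by rw [Matrix.mul_assoc, h1]
    _ = (Q * A) * Q := by rw [← Matrix.mul_assoc, h2]
    _ = Q := hQ2

end Aux


lemma myTraceEqRank {n : Type*} [Fintype n] [DecidableEq n]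
    {E : Matrix n n ℝ} (hsym : Eᵀ = E) (hidem : E * E = E) :
    E.trace = (E.rank : ℝ) := by
  have hH : E.IsHermitian := by
    rwa [Matrix.IsHermitian, conjTranspose_eq_transpose_of_trivial]
  set U : Matrix n n ℝ := (hH.eigenvectorUnitary : Matrix n n ℝ) with hU
  have hUU : star U * U = 1 := Matrix.mem_unitaryGroup_iff'.mp hH.eigenvectorUnitary.2
  have hUU' : U * star U = 1 := Matrix.mem_unitaryGroup_iff.mp hH.eigenvectorUnitary.2
  have hdiag : star U * E * U = diagonal hH.eigenvalues := by
    have := hH.conjStarAlgAut_star_eigenvectorUnitary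
    simpa [RCLike.ofReal_real_eq_id] using this
  have hDD : diagonal hH.eigenvalues * diagonal hH.eigenvalues = diagonal hH.eigenvalues := by
    calc diagonal hH.eigenvalues * diagonal hH.eigenvalues
        = (star U * E * U) * (star U * E * U) := by rw [hdiag]
      _ = star U * (E * ((U * star U) * (E * U))) := by simp only [Matrix.mul_assoc]
      _ = star U * (E * (E * U)) := by rw [hUU', Matrix.one_mul]
      _ = star U * E * U := by rw [← Matrix.mul_assoc E E U, hidem, Matrix.mul_assoc]
      _ = diagonal hH.eigenvalues := hdiag
  have heig : ∀ i, hH.eigenvalues i = 0 ∨ hH.eigenvalues i = 1 := by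
    intro i
    have h := (Matrix.ext_iff.mpr hDD) i i
    rw [Matrix.diagonal_mul_diagonal, Matrix.diagonal_apply_eq, Matrix.diagonal_apply_eq] at h
    have h0 : hH.eigenvalues i * (hH.eigenvalues i - 1) = 0 := by
      rw [mul_sub, mul_one, h, sub_self]
    rcases mul_eq_zero.mp h0 with h' | h'
    · exact Or.inl h'
    · exact Or.inr (by linarith)
  have htr : E.trace = ∑ i, hH.eigenvalues i := by
    conv_lhs => rw [hH.spectral_theorem]
    rw [Unitary.conjStarAlgAut_apply, ← hU, Matrix.trace_mul_cycle, hUU, Matrix.one_mul, Matrix.trace_diagonal]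
    simp [RCLike.ofReal_real_eq_id]
  rw [htr, hH.rank_eq_card_non_zero_eigs, Fintype.card_subtype, Finset.card_filter]
  push_cast
  refine Finset.sum_congr rfl fun i _ => ?_
  rcases heig i with h | h <;> simp [h]

/-- **Trace bound used in the CRB derivation** (inequality (20)):
if `0 ≺ M ≼ cI` then `tr((Jᵀ M J)† (Jᵀ J)) ≥ (1/c) · rank J`. -/
theorem trace_pinv_mul_ge (m q : ℕ) (c : ℝ) (hc : 0 < c)
    (J : Matrix (Fin m) (Fin q) ℝ)
    (M : Matrix (Fin m) (Fin m) ℝ) (hM : M.PosDef)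
    (hMc : (c • (1 : Matrix (Fin m) (Fin m) ℝ) - M).PosSemidef)
    (P : Matrix (Fin q) (Fin q) ℝ)
    (hP : IsMoorePenroseInv (Jᵀ * M * J) P) :
    (1 / c) * (J.rank : ℝ) ≤ (P * (Jᵀ * J)).trace := by
  set A := Jᵀ * M * J with hA
  have hMt : Mᵀ = M := by
    rw [← conjTranspose_eq_transpose_of_trivial]; exact hM.isHermitian
  have hAt : Aᵀ = A := by
    rw [hA]
    simp only [Matrix.transpose_mul, Matrix.transpose_transpose, hMt, Matrix.mul_assoc]
  obtain ⟨hP1, hP2, hP3, hP4⟩ := hP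
  have hPt : IsMoorePenroseInv A Pᵀ := by
    refine ⟨?_, ?_, ?_, ?_⟩
    · have h := congrArg Matrix.transpose hP1
      simpa only [Matrix.transpose_mul, hAt, Matrix.mul_assoc] using h
    · have h := congrArg Matrix.transpose hP2
      simpa only [Matrix.transpose_mul, hAt, Matrix.mul_assoc] using h
    · -- (A * Pᵀ)ᵀ = A * Pᵀ
      have h := congrArg Matrix.transpose hP4
      -- hP4 : (P*A)ᵀ = P*A, so Aᵀ*Pᵀ = P*A, A*Pᵀ = P*A
      have h1 : A * Pᵀ = P * A := by
        calc A * Pᵀ = Aᵀ * Pᵀ := by rw [hAt]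
          _ = (P * A)ᵀ := (Matrix.transpose_mul P A).symm
          _ = P * A := hP4
      rw [h1, hP4]
    · have h1 : Pᵀ * A = A * P := by
        calc Pᵀ * A = Pᵀ * Aᵀ := by rw [hAt]
          _ = (A * P)ᵀ := (Matrix.transpose_mul A P).symm
          _ = A * P := hP3
      rw [h1, hP3]
  have hsymP : Pᵀ = P := myMPUnique hPt ⟨hP1, hP2, hP3, hP4⟩
  have hApsd : A.PosSemidef := by
    have h := hM.posSemidef.conjTranspose_mul_mul_same J
    simpa [conjTranspose_eq_transpose_of_trivial] using h
  have hPpsd : P.PosSemidef := by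
    have h := hApsd.conjTranspose_mul_mul_same P
    rw [conjTranspose_eq_transpose_of_trivial, hsymP, hP2] at h
    exact h
  have hDiff : (c • (Jᵀ * J) - A).PosSemidef := by
    have h := hMc.conjTranspose_mul_mul_same J
    have e : Jᴴ * (c • (1 : Matrix (Fin m) (Fin m) ℝ) - M) * J = c • (Jᵀ * J) - A := by
      rw [conjTranspose_eq_transpose_of_trivial]
      simp only [Matrix.mul_sub, Matrix.sub_mul, Matrix.mul_smul, Matrix.smul_mul,
        Matrix.mul_one, hA]
    rwa [e] at h
  have h0 : 0 ≤ (P * (c • (Jᵀ * J) - A)).trace := myTraceMulNonneg hPpsd hDiff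
  rw [Matrix.mul_sub, Matrix.mul_smul, Matrix.trace_sub, Matrix.trace_smul, sub_nonneg,
    smul_eq_mul] at h0
  -- trace(P*A) = rank(P*A)
  have hEidem : (P * A) * (P * A) = P * A := by
    rw [show (P * A) * (P * A) = (P * A * P) * A by simp only [Matrix.mul_assoc], hP2]
  have htr : (P * A).trace = ((P * A).rank : ℝ) := myTraceEqRank hP4 hEidem
  have hr1 : A.rank ≤ (P * A).rank := by
    have e : A * (P * A) = A := by rw [← Matrix.mul_assoc, hP1]
    calc A.rank = (A * (P * A)).rank := by rw [e]
      _ ≤ (P * A).rank := Matrix.rank_mul_le_right _ _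
  open scoped MatrixOrder in
  have hr2 : A.rank = J.rank := by
    have hS2 : CFC.sqrt M * CFC.sqrt M = M := CFC.sqrt_mul_sqrt_self M hM.posSemidef.nonneg
    set S := CFC.sqrt M with hSdef
    have hSt : Sᵀ = S := by
      rw [← conjTranspose_eq_transpose_of_trivial]
      exact (CFC.sqrt_nonneg M).posSemidef.1
    have hSdet : IsUnit S.det := by
      have hdet : S.det * S.det = M.det := by rw [← Matrix.det_mul, hS2]
      refine isUnit_iff_ne_zero.mpr fun h => ?_
      rw [h, zero_mul] at hdet
      exact hM.det_pos.ne' hdet.symm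
    have e : A = (S * J)ᵀ * (S * J) := by
      calc A = Jᵀ * (S * S) * J := by rw [hS2]
        _ = (S * J)ᵀ * (S * J) := by
            rw [Matrix.transpose_mul, hSt]; simp only [Matrix.mul_assoc]
    rw [e, Matrix.rank_transpose_mul_self, Matrix.rank_mul_eq_right_of_isUnit_det S J hSdet]
  have hle : (J.rank : ℝ) ≤ c * (P * (Jᵀ * J)).trace := by
    calc (J.rank : ℝ) = (A.rank : ℝ) := by rw [hr2]
      _ ≤ ((P * A).rank : ℝ) := Nat.cast_le.mpr hr1
      _ = (P * A).trace := htr.symm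
      _ ≤ c * (P * (Jᵀ * J)).trace := h0
  rw [one_div, inv_mul_le_iff₀ hc]
  exact hle
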